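/- The class of zones over a finite set of clocks X is closed under the three basic operations: if Z and Z' are zones then Z ∩ Z' is a zone; for every Y ⊆ X, the reset [Y]Z = {[Y]v : v ∈ Z} is a zone; and the future →Z = {v + δ : v ∈ Z, δ ∈ ℝ≥0} is a zone. -/

import Mathlib

open Classical

namespace Timed

/-- A clock valuation assigns a nonnegative real to every clock. -/
abbrev Val (X : Type) := X → NNReal

/-- Time elapse on valuations: `(v+δ)(x) = v(x)+δ`. -/
noncomputable def addVal {X : Type} (v : Val X) (δ : NNReal) : Val X := fun x => v x + δ

/-- Reset of the clocks in `Y` to `0`. -/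
noncomputable def resetVal {X : Type} (Y : Set X) (v : Val X) : Val X :=
  fun x => if x ∈ Y then 0 else v x

/-- Comparison operators `<, ≤, =, ≥, >`. -/
inductive CmpOp | lt | le | eq | ge | gt

def CmpOp.holds : CmpOp → ℝ → ℝ → Prop
  | .lt, a, b => a < b
  | .le, a, b => a ≤ b
  | .eq, a, b => a = b
  | .ge, a, b => a ≥ b
  | .gt, a, b => a > b

/-- Clock constraints: finite conjunctions of `x ⋈ c` and `x - y ⋈ c` (and `true`). -/
inductive ClockConstraint (X : Type) where
  | tt : ClockConstraint X
  | single : X → CmpOp → ℤ → ClockConstraint X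
  | diag : X → X → CmpOp → ℤ → ClockConstraint X
  | conj : ClockConstraint X → ClockConstraint X → ClockConstraint X

def ClockConstraint.sat {X : Type} (v : Val X) : ClockConstraint X → Prop
  | .tt => True
  | .single x op c => op.holds (v x : ℝ) (c : ℝ)
  | .diag x y op c => op.holds ((v x : ℝ) - (v y : ℝ)) (c : ℝ)
  | .conj g₁ g₂ => g₁.sat v ∧ g₂.sat v

/-- `⟦g⟧`, the set of valuations satisfying `g`. -/
def sem {X : Type} (g : ClockConstraint X) : Set (Val X) := {v | g.sat v}

/-- A zone is a set of valuations definable by a clock constraint. -/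
def IsZone {X : Type} (Z : Set (Val X)) : Prop := ∃ g : ClockConstraint X, Z = sem g

/-- Future (time elapse) of a set of valuations. -/
def future {X : Type} (W : Set (Val X)) : Set (Val X) :=
  {w | ∃ v ∈ W, ∃ δ : NNReal, w = addVal v δ}

/-- Reset of a set of valuations: `[Y]W`. -/
def resetSet {X : Type} (Y : Set X) (W : Set (Val X)) : Set (Val X) :=
  resetVal Y '' W

/-- A timed automaton `(Q, X, q₀, T, F)`. -/
structure Automaton (Q X : Type) where
  init : Q
  trans : Set (Q × ClockConstraint X × Set X × Q)
  final : Set Q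

/-- `Post_t(W) = {v' : ∃ v ∈ W, ∃ δ ≥ 0, v ⊨ g ∧ v' = [Y]v + δ}` for `t = (q,g,Y,q')`. -/
def Post {Q X : Type} (t : Q × ClockConstraint X × Set X × Q) (W : Set (Val X)) :
    Set (Val X) :=
  {w | ∃ v ∈ W, ∃ δ : NNReal, t.2.1.sat v ∧ w = addVal (resetVal t.2.2.1 v) δ}

/-- The zero valuation. -/
def zeroVal (X : Type) : Val X := fun _ => 0

/-- One step of the semantics: a time elapse or a discrete transition. -/
inductive Step {Q X : Type} (A : Automaton Q X) : (Q × Val X) → (Q × Val X) → Prop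
  | delay (q : Q) (v : Val X) (δ : NNReal) : Step A (q, v) (q, addVal v δ)
  | disc {q : Q} {v : Val X} {g : ClockConstraint X} {R : Set X} {q₁ : Q}
      (ht : (q, g, R, q₁) ∈ A.trans) (hg : g.sat v) :
      Step A (q, v) (q₁, resetVal R v)

/-- A configuration is reachable if some finite run from `(q₀, 0)` ends in it. -/
def Reachable {Q X : Type} (A : Automaton Q X) (c : Q × Val X) : Prop :=
  Relation.ReflTransGen (Step A) (A.init, zeroVal X) c

/-- The initial zone `Z₀ = future {0}`. -/
def initZone (X : Type) : Set (Val X) := future {zeroVal X}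

/-- The set `S` of reachable symbolic states: least set containing `(q₀, Z₀)` and
closed under nonempty `Post`. -/
inductive SymbReach {Q X : Type} (A : Automaton Q X) : Q × Set (Val X) → Prop
  | init : SymbReach A (A.init, initZone X)
  | step {q : Q} {Z : Set (Val X)} {g : ClockConstraint X} {Y : Set X} {q' : Q}
      (h : SymbReach A (q, Z)) (ht : (q, g, Y, q') ∈ A.trans)
      (hne : Post (q, g, Y, q') Z ≠ ∅) :
      SymbReach A (q', Post (q, g, Y, q') Z)

/-- `N` is saturated w.r.t. the extrapolation operator `extra`. -/
def ExtraSaturated {Q X : Type} (A : Automaton Q X)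
    (extra : Q → Set (Val X) → Set (Val X)) (N : Set (Q × Set (Val X))) : Prop :=
  (∃ Z'', (A.init, Z'') ∈ N ∧ extra A.init (initZone X) ⊆ Z'') ∧
  ∀ q Z, (q, Z) ∈ N → ∀ g Y q', (q, g, Y, q') ∈ A.trans →
    Post (q, g, Y, q') Z ≠ ∅ →
    ∃ Z'', (q', Z'') ∈ N ∧ extra q' (Post (q, g, Y, q') Z) ⊆ Z''

/-- A `K`-bounded clock constraint: every `x ⋈ c` has `-K x ≤ c ≤ K x` and
every `x - y ⋈ c` has `-K y ≤ c ≤ K x`. -/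
def KBounded {X : Type} (K : X → ℕ) : ClockConstraint X → Prop
  | .tt => True
  | .single x _ c => -(K x : ℤ) ≤ c ∧ c ≤ (K x : ℤ)
  | .diag x y _ c => -(K y : ℤ) ≤ c ∧ c ≤ (K x : ℤ)
  | .conj g₁ g₂ => KBounded K g₁ ∧ KBounded K g₂

/-- A `K`-bounded zone. -/
def IsKBoundedZone {X : Type} (K : X → ℕ) (Z : Set (Val X)) : Prop :=
  ∃ g : ClockConstraint X, KBounded K g ∧ Z = sem g

/-- An `LU`-bounded clock constraint: every `x ⋈ c` has `-U x ≤ c ≤ L x` and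
every `x - y ⋈ c` has `-U y ≤ c ≤ L x`. -/
def LUBounded {X : Type} (L U : X → ℕ) : ClockConstraint X → Prop
  | .tt => True
  | .single x _ c => -(U x : ℤ) ≤ c ∧ c ≤ (L x : ℤ)
  | .diag x y _ c => -(U y : ℤ) ≤ c ∧ c ≤ (L x : ℤ)
  | .conj g₁ g₂ => LUBounded L U g₁ ∧ LUBounded L U g₂

/-- An `LU`-bounded zone. -/
def IsLUBoundedZone {X : Type} (L U : X → ℕ) (Z : Set (Val X)) : Prop :=
  ∃ g : ClockConstraint X, LUBounded L U g ∧ Z = sem g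

/-- A diagonal-free clock constraint. -/
def DiagFree {X : Type} : ClockConstraint X → Prop
  | .tt => True
  | .single _ _ _ => True
  | .diag _ _ _ _ => False
  | .conj g₁ g₂ => DiagFree g₁ ∧ DiagFree g₂

/-- Every atomic constraint `x ⋈ c` of the guard satisfies `c ≤ K x`. -/
def GuardKBounded {X : Type} (K : X → ℕ) : ClockConstraint X → Prop
  | .tt => True
  | .single x _ c => c ≤ (K x : ℤ)
  | .diag _ _ _ _ => True
  | .conj g₁ g₂ => GuardKBounded K g₁ ∧ GuardKBounded K g₂

/-- `LU`-boundedness of guards: `x < c`, `x ≤ c` need `c ≤ U x`; `x > d`, `x ≥ d`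
need `d ≤ L x`; `x = c` needs both. -/
def GuardLUBounded {X : Type} (L U : X → ℕ) : ClockConstraint X → Prop
  | .tt => True
  | .single x op c =>
      match op with
      | .lt => c ≤ (U x : ℤ)
      | .le => c ≤ (U x : ℤ)
      | .gt => c ≤ (L x : ℤ)
      | .ge => c ≤ (L x : ℤ)
      | .eq => c ≤ (U x : ℤ) ∧ c ≤ (L x : ℤ)
  | .diag _ _ _ _ => True
  | .conj g₁ g₂ => GuardLUBounded L U g₁ ∧ GuardLUBounded L U g₂

/-- A (strong timed) simulation: a preorder relating only configurations with the same
state, compatible with time elapses and discrete transitions. -/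
def IsSimulation {Q X : Type} (A : Automaton Q X)
    (R : (Q × Val X) → (Q × Val X) → Prop) : Prop :=
  (∀ c, R c c) ∧
  (∀ c₁ c₂ c₃, R c₁ c₂ → R c₂ c₃ → R c₁ c₃) ∧
  (∀ c c', R c c' → c.1 = c'.1) ∧
  (∀ q v v', R (q, v) (q, v') →
    (∀ δ : NNReal, R (q, addVal v δ) (q, addVal v' δ)) ∧
    (∀ g Y q₁, (q, g, Y, q₁) ∈ A.trans → g.sat v →
      g.sat v' ∧ R (q₁, resetVal Y v) (q₁, resetVal Y v')))

/-- Labels of run steps: a delay, or a discrete transition. -/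
inductive RunLabel (Q X : Type) where
  | delay : NNReal → RunLabel Q X
  | disc : Q × ClockConstraint X × Set X × Q → RunLabel Q X

/-- Finite runs with an explicit sequence of delays and transitions. -/
inductive LRun {Q X : Type} (A : Automaton Q X) :
    (Q × Val X) → List (RunLabel Q X) → (Q × Val X) → Prop
  | refl (c : Q × Val X) : LRun A c [] c
  | delay {q : Q} {v : Val X} (δ : NNReal) {l : List (RunLabel Q X)} {c' : Q × Val X}
      (h : LRun A (q, addVal v δ) l c') : LRun A (q, v) (RunLabel.delay δ :: l) c'
  | disc {q : Q} {v : Val X} {g : ClockConstraint X} {Y : Set X} {q₁ : Q}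
      {l : List (RunLabel Q X)} {c' : Q × Val X}
      (ht : (q, g, Y, q₁) ∈ A.trans) (hg : g.sat v)
      (h : LRun A (q₁, resetVal Y v) l c') :
      LRun A (q, v) (RunLabel.disc (q, g, Y, q₁) :: l) c'

/-- `N` is saturated w.r.t. the simulation `R`. -/
def SimSaturated {Q X : Type} (A : Automaton Q X)
    (R : (Q × Val X) → (Q × Val X) → Prop) (N : Set (Q × Set (Val X))) : Prop :=
  (∃ Z'', (A.init, Z'') ∈ N ∧ ∀ v ∈ initZone X, ∃ v' ∈ Z'', R (A.init, v) (A.init, v')) ∧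
  ∀ q Z, (q, Z) ∈ N → ∀ g Y q', (q, g, Y, q') ∈ A.trans →
    Post (q, g, Y, q') Z ≠ ∅ →
    ∃ Z'', (q', Z'') ∈ N ∧ ∀ v ∈ Post (q, g, Y, q') Z, ∃ v' ∈ Z'', R (q', v) (q', v')

/-- Atomic constraints, allowing the zero clock `x₀` on the left of a difference. -/
inductive Atom (X : Type) where
  | single : X → CmpOp → ℤ → Atom X
  | negSingle : X → CmpOp → ℤ → Atom X    -- `x₀ - y ⋈ c`
  | diag : X → X → CmpOp → ℤ → Atom X

def Atom.sat {X : Type} (v : Val X) : Atom X → Prop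
  | .single x op c => op.holds (v x : ℝ) (c : ℝ)
  | .negSingle y op c => op.holds (-(v y : ℝ)) (c : ℝ)
  | .diag x y op c => op.holds ((v x : ℝ) - (v y : ℝ)) (c : ℝ)

/-- `pre(φ, Y)` of an atomic constraint w.r.t. a reset set `Y`. -/
noncomputable def preAtom {X : Type} (Y : Set X) : Atom X → Set (Atom X)
  | .single x op c => if x ∈ Y then ∅ else {Atom.single x op c}
  | .negSingle y op c => if y ∈ Y then ∅ else {Atom.negSingle y op c}
  | .diag x y op c =>
      if x ∈ Y then (if y ∈ Y then ∅ else {Atom.negSingle y op c})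
      else (if y ∈ Y then {Atom.single x op c} else {Atom.diag x y op c})

/-- The set of atomic constraints of a guard. -/
def atomsOf {X : Type} : ClockConstraint X → Set (Atom X)
  | .tt => ∅
  | .single x op c => {Atom.single x op c}
  | .diag x y op c => {Atom.diag x y op c}
  | .conj g₁ g₂ => atomsOf g₁ ∪ atomsOf g₂

/-- One step of the fixpoint equations defining the constraint map `G`. -/
noncomputable def cmapStep {Q X : Type} (A : Automaton Q X)
    (G : Q → Set (Atom X)) (q : Q) : Set (Atom X) :=
  {φ | ∃ g Y q', (q, g, Y, q') ∈ A.trans ∧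
        (φ ∈ atomsOf g ∨ ∃ ψ ∈ G q', φ ∈ preAtom Y ψ)}

/-- The `G`-preorder: `(q,v) ≼_G (q,v')` iff for all `δ` and all `φ ∈ G q`,
`v+δ ⊨ φ` implies `v'+δ ⊨ φ` (only configurations with the same state are related). -/
def GPre {Q X : Type} (G : Q → Set (Atom X)) (c c' : Q × Val X) : Prop :=
  c.1 = c'.1 ∧
  ∀ δ : NNReal, ∀ φ ∈ G c.1, Atom.sat (addVal c.2 δ) φ → Atom.sat (addVal c'.2 δ) φ

end Timed
open Timed


namespace ZAux
open Timed

variable {X : Type}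

/-! ### Atoms -/

inductive At (X : Type) where
  | sgl : X → CmpOp → ℤ → At X
  | dg : X → X → CmpOp → ℤ → At X

def At.sat (v : Val X) : At X → Prop
  | .sgl x op c => op.holds (v x : ℝ) (c : ℝ)
  | .dg x y op c => op.holds ((v x : ℝ) - (v y : ℝ)) (c : ℝ)

def ofAtoms : List (At X) → ClockConstraint X
  | [] => .tt
  | (At.sgl x op c) :: l => .conj (.single x op c) (ofAtoms l)
  | (At.dg x y op c) :: l => .conj (.diag x y op c) (ofAtoms l)

theorem ofAtoms_sat (l : List (At X)) (v : Val X) :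
    (ofAtoms l).sat v ↔ ∀ a ∈ l, a.sat v := by
  induction l with
  | nil => simp [ofAtoms, ClockConstraint.sat]
  | cons a l ih =>
      cases a <;> simp [ofAtoms, ClockConstraint.sat, At.sat, ih]

def toAtoms : ClockConstraint X → List (At X)
  | .tt => []
  | .single x op c => [.sgl x op c]
  | .diag x y op c => [.dg x y op c]
  | .conj g₁ g₂ => toAtoms g₁ ++ toAtoms g₂

theorem toAtoms_sat (g : ClockConstraint X) (v : Val X) :
    g.sat v ↔ ∀ a ∈ toAtoms g, a.sat v := by
  induction g with
  | tt => simp [toAtoms, ClockConstraint.sat]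
  | single x op c => simp [toAtoms, ClockConstraint.sat, At.sat]
  | diag x y op c => simp [toAtoms, ClockConstraint.sat, At.sat]
  | conj g₁ g₂ ih₁ ih₂ =>
      simp only [toAtoms, ClockConstraint.sat, ih₁, ih₂, List.mem_append]
      constructor
      · rintro ⟨h₁, h₂⟩ a (h | h) <;> [exact h₁ a h; exact h₂ a h]
      · intro h
        exact ⟨fun a ha => h a (Or.inl ha), fun a ha => h a (Or.inr ha)⟩

def mapAt {Y : Type} (m : X → Y) : At X → At Y
  | .sgl x op c => .sgl (m x) op c
  | .dg x y op c => .dg (m x) (m y) op c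

theorem mapAt_sat {Y : Type} (m : X → Y) (a : At X) (u : Val Y) :
    (mapAt m a).sat u ↔ a.sat (u ∘ m) := by
  cases a <;> rfl

/-! ### Bounds -/

structure Bd (X : Type) where
  base : Option X
  str : Bool
  c : ℤ

def bval (v : Val X) : Option X → ℝ
  | none => 0
  | some y => (v y : ℝ)

def lval (v : Val X) (b : Bd X) : ℝ := bval v b.base + (b.c : ℝ)

def lowHolds (v : Val X) (r : ℝ) (b : Bd X) : Prop :=
  if b.str then lval v b < r else lval v b ≤ r

def upHolds (v : Val X) (r : ℝ) (b : Bd X) : Prop :=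
  if b.str then r < lval v b else r ≤ lval v b

def pcond (v : Val X) (l u : Bd X) : Prop :=
  if l.str || u.str then lval v l < lval v u else lval v l ≤ lval v u

theorem pcond_of_bounds {v : Val X} {r : ℝ} {l u : Bd X}
    (hl : lowHolds v r l) (hu : upHolds v r u) : pcond v l u := by
  cases hls : l.str <;> cases hus : u.str <;>
    simp_all [lowHolds, upHolds, pcond] <;> linarith

/-- the implicit lower bound `0 ≤ r`. -/
def zeroBd : Bd X := ⟨none, false, 0⟩

theorem lval_zeroBd (v : Val X) : lval v (zeroBd : Bd X) = 0 := by
  simp [lval, zeroBd, bval]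

/-! ### Classification of atoms mentioning the eliminated variable -/

/-- the "false" atom. -/
def falseAt (x0 : X) : At X := At.sgl x0 .lt 0

theorem falseAt_sat (x0 : X) (v : Val X) : ¬ (falseAt x0).sat v := by
  simp [falseAt, At.sat, CmpOp.holds]

def cAts (x0 : X) (b : Bool) : List (At X) := if b then [] else [falseAt x0]

theorem cAts_sat (x0 : X) (b : Bool) (v : Val X) :
    (∀ a ∈ cAts x0 b, a.sat v) ↔ b = true := by
  cases b <;> simp [cAts]
  exact falseAt_sat x0 v

def zrel : CmpOp → ℤ → ℤ → Bool
  | .lt, a, b => decide (a < b)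
  | .le, a, b => decide (a ≤ b)
  | .eq, a, b => decide (a = b)
  | .ge, a, b => decide (b ≤ a)
  | .gt, a, b => decide (b < a)

theorem zrel_iff (op : CmpOp) (a b : ℤ) :
    zrel op a b = true ↔ op.holds (a : ℝ) (b : ℝ) := by
  cases op <;> simp [zrel, CmpOp.holds] <;>
    constructor <;> intro h <;> exact_mod_cast h

def flipOp : CmpOp → CmpOp
  | .lt => .gt
  | .le => .ge
  | .eq => .eq
  | .ge => .le
  | .gt => .lt

/-- lower bounds from `r ⋈ B`. -/
def lbs (b : Option X) (op : CmpOp) (c : ℤ) : List (Bd X) :=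
  match op with
  | .lt => [] | .le => []
  | .eq => [⟨b, false, c⟩] | .ge => [⟨b, false, c⟩]
  | .gt => [⟨b, true, c⟩]

/-- upper bounds from `r ⋈ B`. -/
def ubs (b : Option X) (op : CmpOp) (c : ℤ) : List (Bd X) :=
  match op with
  | .lt => [⟨b, true, c⟩] | .le => [⟨b, false, c⟩]
  | .eq => [⟨b, false, c⟩]
  | .ge => [] | .gt => []

theorem lu_sat (v : Val X) (r : ℝ) (b : Option X) (op : CmpOp) (c : ℤ) :
    op.holds r (bval v b + (c : ℝ)) ↔
      ((∀ l ∈ lbs b op c, lowHolds v r l) ∧ (∀ u ∈ ubs b op c, upHolds v r u)) := by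
  cases op <;>
    simp [CmpOp.holds, lbs, ubs, lowHolds, upHolds, lval] <;>
    constructor <;> intro h <;> first
      | exact ⟨le_of_eq h.symm, le_of_eq h⟩
      | exact le_antisymm h.2 h.1
      | exact h

def extendV (v : Val X) (r : NNReal) : Val (Option X) :=
  fun o => Option.elim o r v

def classify (x0 : X) : At (Option X) → List (At X) × List (Bd X) × List (Bd X)
  | .sgl (some y) op c => ([.sgl y op c], [], [])
  | .sgl none op c => ([], lbs none op c, ubs none op c)
  | .dg (some y) (some z) op c => ([.dg y z op c], [], [])
  | .dg none (some y) op c => ([], lbs (some y) op c, ubs (some y) op c)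
  | .dg (some y) none op c =>
      ([], lbs (some y) (flipOp op) (-c), ubs (some y) (flipOp op) (-c))
  | .dg none none op c => (cAts x0 (zrel op 0 c), [], [])

theorem holds_sub_left (op : CmpOp) (a b c : ℝ) :
    op.holds (a - b) c ↔ op.holds a (b + c) := by
  cases op <;> simp [CmpOp.holds] <;> constructor <;> intro h <;> linarith

theorem holds_sub_right (op : CmpOp) (a b c : ℝ) :
    op.holds (a - b) c ↔ (flipOp op).holds b (a + -c) := by
  cases op <;> simp [CmpOp.holds, flipOp] <;> constructor <;> intro h <;> linarith

theorem classify_sat (x0 : X) (v : Val X) (r : NNReal) (a : At (Option X)) :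
    a.sat (extendV v r) ↔
      ((∀ b ∈ (classify x0 a).1, b.sat v) ∧
       (∀ l ∈ (classify x0 a).2.1, lowHolds v (r : ℝ) l) ∧
       (∀ u ∈ (classify x0 a).2.2, upHolds v (r : ℝ) u)) := by
  rcases a with ⟨x, op, c⟩ | ⟨x, y, op, c⟩
  · rcases x with _ | y
    · have : (At.sgl (none : Option X) op c).sat (extendV v r)
          ↔ op.holds (r : ℝ) (bval v none + (c : ℝ)) := by
        simp [At.sat, extendV, bval]
      rw [this, lu_sat]
      simp [classify]
    · simp [At.sat, classify, extendV]
  · rcases x with _ | x' <;> rcases y with _ | y'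
    · -- dg none none
      have : (At.dg (none : Option X) none op c).sat (extendV v r)
          ↔ op.holds ((0:ℤ) : ℝ) (c : ℝ) := by
        simp [At.sat, extendV]
      rw [this, ← zrel_iff]
      simp [classify, cAts_sat]
    · -- dg none (some y')
      have h1 : (At.dg (none : Option X) (some y') op c).sat (extendV v r)
          ↔ op.holds ((r : ℝ) - (v y' : ℝ)) (c : ℝ) := by
        simp [At.sat, extendV]
      rw [h1, holds_sub_left, show ((v y' : ℝ) + (c : ℝ)) = bval v (some y') + (c : ℝ) from rfl,
        lu_sat]
      simp [classify]
    · -- dg (some x') none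
      have h1 : (At.dg (some x') (none : Option X) op c).sat (extendV v r)
          ↔ op.holds ((v x' : ℝ) - (r : ℝ)) (c : ℝ) := by
        simp [At.sat, extendV]
      rw [h1, holds_sub_right,
        show ((v x' : ℝ) + -(c : ℝ)) = bval v (some x') + ((-c : ℤ) : ℝ) by push_cast; rfl,
        lu_sat]
      simp [classify]
    · simp [At.sat, classify, extendV]

/-! ### Pair combination -/

def pairAts (x0 : X) (l u : Bd X) : List (At X) :=
  match l.base, u.base with
  | none, none => cAts x0 (if l.str || u.str then decide (l.c < u.c) else decide (l.c ≤ u.c))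
  | none, some z => [.sgl z (if l.str || u.str then .gt else .ge) (l.c - u.c)]
  | some y, none => [.sgl y (if l.str || u.str then .lt else .le) (u.c - l.c)]
  | some y, some z => [.dg y z (if l.str || u.str then .lt else .le) (u.c - l.c)]

theorem pairAts_sat (x0 : X) (l u : Bd X) (v : Val X) :
    (∀ a ∈ pairAts x0 l u, a.sat v) ↔ pcond v l u := by
  rcases l with ⟨lb, ls, lc⟩
  rcases u with ⟨ub, us, uc⟩
  rcases lb with _ | y <;> rcases ub with _ | z
  · rw [show pairAts x0 ⟨none, ls, lc⟩ ⟨none, us, uc⟩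
        = cAts x0 (if ls || us then decide (lc < uc) else decide (lc ≤ uc)) from rfl,
      cAts_sat]
    cases hs : (ls || us) <;>
      simp [hs, pcond, lval, bval] <;>
      constructor <;> intro h <;> exact_mod_cast h
  · cases hs : (ls || us) <;>
      simp [pairAts, hs, pcond, At.sat, CmpOp.holds, lval, bval] <;>
      constructor <;> intro h <;> push_cast at h ⊢ <;> linarith
  · cases hs : (ls || us) <;>
      simp [pairAts, hs, pcond, At.sat, CmpOp.holds, lval, bval] <;>
      constructor <;> intro h <;> push_cast at h ⊢ <;> linarith
  · cases hs : (ls || us) <;>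
      simp [pairAts, hs, pcond, At.sat, CmpOp.holds, lval, bval] <;>
      constructor <;> intro h <;> push_cast at h ⊢ <;> linarith

/-! ### Existence of a witness from pairwise conditions -/

theorem exists_max {α β : Type*} [LinearOrder β] (f : α → β) :
    ∀ (l : List α), l ≠ [] → ∃ m ∈ l, ∀ a ∈ l, f a ≤ f m := by
  intro l
  induction l with
  | nil => intro h; exact absurd rfl h
  | cons a t ih =>
      intro _
      rcases t with _ | ⟨b, t'⟩
      · exact ⟨a, by simp⟩
      · obtain ⟨m, hm, hmax⟩ := ih (by simp)
        rcases le_total (f a) (f m) with h | h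
        · exact ⟨m, List.mem_cons_of_mem _ hm, by
            intro x hx
            rcases List.mem_cons.mp hx with rfl | hx
            · exact h
            · exact hmax x hx⟩
        · exact ⟨a, List.mem_cons_self, by
            intro x hx
            rcases List.mem_cons.mp hx with rfl | hx
            · exact le_refl _
            · exact le_trans (hmax x hx) h⟩

theorem exists_r (v : Val X) (lows ups : List (Bd X))
    (h : ∀ l ∈ (zeroBd : Bd X) :: lows, ∀ u ∈ ups, pcond v l u) :
    ∃ r : NNReal, (∀ l ∈ lows, lowHolds v (r : ℝ) l) ∧ (∀ u ∈ ups, upHolds v (r : ℝ) u) := by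
  obtain ⟨m, hmL, hmax⟩ :=
    exists_max (fun l : Bd X => toLex ((lval v l), l.str)) ((zeroBd : Bd X) :: lows)
      (List.cons_ne_nil _ _)
  have key : ∀ l ∈ (zeroBd : Bd X) :: lows,
      lval v l < lval v m ∨ (lval v l = lval v m ∧ (l.str = true → m.str = true)) := by
    intro l hl
    have := hmax l hl
    rcases Prod.Lex.le_iff.mp this with h1 | ⟨h1, h2⟩
    · exact Or.inl h1
    · refine Or.inr ⟨h1, fun hs => ?_⟩
      cases hms : m.str
      · rw [hs, hms] at h2; exact absurd h2 (by simp)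
      · rfl
  have hA0 : 0 ≤ lval v m := by
    rcases key _ (List.mem_cons_self) with h1 | ⟨h1, _⟩
    · rw [lval_zeroBd] at h1; exact le_of_lt h1
    · rw [lval_zeroBd] at h1; exact le_of_eq h1
  cases hms : m.str
  · -- maximal lower bound is non-strict: take r = lval v m
    refine ⟨⟨lval v m, hA0⟩, ?_, ?_⟩
    · intro l hl
      rcases key l (List.mem_cons_of_mem _ hl) with h1 | ⟨h1, h2⟩
      · unfold lowHolds; split <;> [exact h1; exact le_of_lt h1]
      · have hls : l.str = false := by
          cases hls : l.str
          · rfl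
          · rw [h2 hls] at hms; exact absurd hms (by simp)
        unfold lowHolds; rw [hls]; simp [h1, NNReal.toReal]
    · intro u hu
      have := h m hmL u hu
      unfold pcond at this
      rw [hms] at this
      unfold upHolds
      cases hus : u.str <;> rw [hus] at this <;> simp_all [NNReal.toReal]
  · -- maximal lower bound is strict: need r strictly above it
    rcases ups with _ | ⟨u0, us'⟩
    · -- no upper bounds
      refine ⟨⟨lval v m + 1, by linarith⟩, ?_, by simp⟩
      intro l hl
      rcases key l (List.mem_cons_of_mem _ hl) with h1 | ⟨h1, _⟩ <;>
        · unfold lowHolds; split <;> push_cast [NNReal.toReal] <;> linarith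
    · obtain ⟨w, hw, hwmin⟩ :=
        exists_max (fun u : Bd X => -(lval v u)) (u0 :: us') (List.cons_ne_nil _ _)
      have hwmin' : ∀ u ∈ u0 :: us', lval v w ≤ lval v u := by
        intro u hu
        have := hwmin u hu
        simpa using this
      have hcond := h m hmL w hw
      unfold pcond at hcond
      rw [hms] at hcond
      simp only [Bool.true_or, if_true] at hcond
      refine ⟨⟨(lval v m + lval v w) / 2, by linarith⟩, ?_, ?_⟩
      · intro l hl
        rcases key l (List.mem_cons_of_mem _ hl) with h1 | ⟨h1, _⟩ <;>
          · unfold lowHolds; split <;> push_cast [NNReal.toReal] <;> linarith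
      · intro u hu
        have h2 := hwmin' u hu
        unfold upHolds; split <;> push_cast [NNReal.toReal] <;> linarith

/-! ### Elimination -/

def elimL (x0 : X) (L : List (At (Option X))) : List (At X) :=
  (L.flatMap (fun a => (classify x0 a).1)) ++
    ((zeroBd :: L.flatMap (fun a => (classify x0 a).2.1)).flatMap
      (fun l => (L.flatMap (fun a => (classify x0 a).2.2)).flatMap
        (fun u => pairAts x0 l u)))

theorem elimL_sat (x0 : X) (L : List (At (Option X))) (v : Val X) :
    (∀ a ∈ elimL x0 L, a.sat v) ↔ ∃ r : NNReal, ∀ a ∈ L, a.sat (extendV v r) := by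
  constructor
  · intro hout
    have hpures : ∀ a ∈ L, ∀ b ∈ (classify x0 a).1, b.sat v := by
      intro a ha b hb
      exact hout b (List.mem_append_left _ (List.mem_flatMap.mpr ⟨a, ha, hb⟩))
    have hpairs : ∀ l ∈ (zeroBd :: L.flatMap (fun a => (classify x0 a).2.1)),
        ∀ u ∈ L.flatMap (fun a => (classify x0 a).2.2), pcond v l u := by
      intro l hl u hu
      rw [← pairAts_sat x0 l u v]
      intro a ha
      exact hout a (List.mem_append_right _
        (List.mem_flatMap.mpr ⟨l, hl, List.mem_flatMap.mpr ⟨u, hu, ha⟩⟩))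
    obtain ⟨r, hlow, hup⟩ := exists_r v _ _ hpairs
    refine ⟨r, fun a ha => ?_⟩
    rw [classify_sat x0 v r a]
    refine ⟨hpures a ha, fun l hl => ?_, fun u hu => ?_⟩
    · exact hlow l (List.mem_flatMap.mpr ⟨a, ha, hl⟩)
    · exact hup u (List.mem_flatMap.mpr ⟨a, ha, hu⟩)
  · rintro ⟨r, hin⟩
    have hlow : ∀ l ∈ (zeroBd :: L.flatMap (fun a => (classify x0 a).2.1)),
        lowHolds v (r : ℝ) l := by
      intro l hl
      rcases List.mem_cons.mp hl with rfl | hl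
      · unfold lowHolds
        rw [lval_zeroBd]
        simp [zeroBd, r.coe_nonneg]
      · obtain ⟨a, ha, hla⟩ := List.mem_flatMap.mp hl
        exact ((classify_sat x0 v r a).mp (hin a ha)).2.1 l hla
    have hup : ∀ u ∈ L.flatMap (fun a => (classify x0 a).2.2), upHolds v (r : ℝ) u := by
      intro u hu
      obtain ⟨a, ha, hua⟩ := List.mem_flatMap.mp hu
      exact ((classify_sat x0 v r a).mp (hin a ha)).2.2 u hua
    intro a ha
    rcases List.mem_append.mp ha with hp | hp
    · obtain ⟨a0, ha0, hb⟩ := List.mem_flatMap.mp hp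
      exact ((classify_sat x0 v r a0).mp (hin a0 ha0)).1 a hb
    · obtain ⟨l, hl, hrest⟩ := List.mem_flatMap.mp hp
      obtain ⟨u, hu, hau⟩ := List.mem_flatMap.mp hrest
      exact (pairAts_sat x0 l u v).mpr
        (pcond_of_bounds (hlow l hl) (hup u hu)) a hau

/-! ### Projection (existential quantification over one clock) -/

theorem extendV_comp [DecidableEq X] (v : Val X) (r : NNReal) (xh : X) :
    (extendV v r) ∘ (fun y => if y = xh then none else some y) = Function.update v xh r := by
  funext y
  by_cases hy : y = xh <;> simp [Function.update, extendV, hy]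

theorem isZone_proj [DecidableEq X] (x0 xh : X) {Z : Set (Val X)} (hZ : IsZone Z) :
    IsZone {v | ∃ r : NNReal, Function.update v xh r ∈ Z} := by
  obtain ⟨g, rfl⟩ := hZ
  refine ⟨ofAtoms (elimL x0 ((toAtoms g).map (mapAt (fun y => if y = xh then none else some y)))), ?_⟩
  ext v
  simp only [Set.mem_setOf_eq, sem, ofAtoms_sat, elimL_sat]
  apply exists_congr
  intro r
  rw [show (∀ a ∈ (toAtoms g).map (mapAt (fun y => if y = xh then none else some y)),
      a.sat (extendV v r)) ↔ ∀ b ∈ toAtoms g, b.sat (Function.update v xh r) by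
    rw [← extendV_comp v r xh]
    constructor
    · intro h b hb
      have := h _ (List.mem_map.mpr ⟨b, hb, rfl⟩)
      rwa [mapAt_sat] at this
    · intro h a ha
      obtain ⟨b, hb, rfl⟩ := List.mem_map.mp ha
      rw [mapAt_sat]
      exact h b hb]
  rw [← toAtoms_sat]

/-! ### Reset -/

theorem val_ext_empty (hX : IsEmpty X) (v w : Val X) : v = w :=
  funext fun x => isEmptyElim x

theorem sat_of_empty (hX : IsEmpty X) (g : ClockConstraint X) (v : Val X) : g.sat v := by
  induction g with
  | tt => trivial
  | single x op c => exact isEmptyElim x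
  | diag x y op c => exact isEmptyElim x
  | conj g₁ g₂ ih₁ ih₂ => exact ⟨ih₁, ih₂⟩

theorem isZone_inter {Z Z' : Set (Val X)} (hZ : IsZone Z) (hZ' : IsZone Z') :
    IsZone (Z ∩ Z') := by
  obtain ⟨g, rfl⟩ := hZ
  obtain ⟨g', rfl⟩ := hZ'
  exact ⟨.conj g g', rfl⟩

theorem isZone_congr {Z W : Set (Val X)} (h : Z = W) (hZ : IsZone Z) : IsZone W := h ▸ hZ

theorem isZone_projFinset [DecidableEq X] (x0 : X) (s : Finset X) {Z : Set (Val X)}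
    (hZ : IsZone Z) : IsZone {v | ∃ u ∈ Z, ∀ x ∉ s, v x = u x} := by
  induction s using Finset.induction_on with
  | empty =>
      apply isZone_congr ?_ hZ
      ext v
      simp only [Set.mem_setOf_eq, Finset.notMem_empty, not_false_iff, forall_true_left]
      constructor
      · intro hv; exact ⟨v, hv, fun x => rfl⟩
      · rintro ⟨u, hu, hag⟩
        have : v = u := funext fun x => hag x
        rwa [this]
  | @insert a s ha ih =>
      have heq : {v : Val X | ∃ u ∈ Z, ∀ x ∉ insert a s, v x = u x} =
          {v : Val X | ∃ r : NNReal, Function.update v a r ∈ {v : Val X | ∃ u ∈ Z, ∀ x ∉ s, v x = u x}} := by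
        ext v
        simp only [Set.mem_setOf_eq]
        constructor
        · rintro ⟨u, hu, hag⟩
          refine ⟨u a, u, hu, fun x hx => ?_⟩
          by_cases hxa : x = a
          · subst hxa; simp [Function.update]
          · rw [Function.update_of_ne hxa]
            exact hag x (by simp [hxa, hx])
        · rintro ⟨r, u, hu, hag⟩
          refine ⟨u, hu, fun x hx => ?_⟩
          have hxa : x ≠ a := fun h => hx (by simp [h])
          have hxs : x ∉ s := fun h => hx (by simp [h])
          have := hag x hxs
          rwa [Function.update_of_ne hxa] at this
      exact isZone_congr heq.symm (isZone_proj x0 a ih)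

theorem isZone_zeroOn [Fintype X] [DecidableEq X] (Y : Set X) [DecidablePred (· ∈ Y)] :
    IsZone {w : Val X | ∀ x ∈ Y, w x = 0} := by
  refine ⟨ofAtoms ((Y.toFinset.toList).map (fun x => At.sgl x .eq 0)), ?_⟩
  ext w
  simp only [Set.mem_setOf_eq, sem, ofAtoms_sat]
  constructor
  · intro h a ha
    obtain ⟨x, hx, rfl⟩ := List.mem_map.mp ha
    have hxY : x ∈ Y := by
      rw [← Set.mem_toFinset]
      exact (Finset.mem_toList).mp hx
    have := h x hxY
    simp [At.sat, CmpOp.holds, this]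
  · intro h x hx
    have hmem : At.sgl x CmpOp.eq 0 ∈ (Y.toFinset.toList).map (fun x => At.sgl x .eq 0) :=
      List.mem_map.mpr ⟨x, (Finset.mem_toList).mpr (Set.mem_toFinset.mpr hx), rfl⟩
    have := h _ hmem
    simp only [At.sat, CmpOp.holds, Int.cast_zero] at this
    exact_mod_cast this

theorem isZone_resetSet [Fintype X] (Y : Set X) {Z : Set (Val X)} (hZ : IsZone Z) :
    IsZone (resetSet Y Z) := by
  classical
  rcases isEmpty_or_nonempty X with hX | hX
  · obtain ⟨g, rfl⟩ := hZ
    refine ⟨.tt, ?_⟩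
    ext w
    simp only [sem, Set.mem_setOf_eq, ClockConstraint.sat]
    constructor
    · intro _; trivial
    · intro _
      exact ⟨w, sat_of_empty hX g w, val_ext_empty hX _ _⟩
  · obtain ⟨x0⟩ := hX
    have heq : resetSet Y Z =
        {w : Val X | ∀ x ∈ Y, w x = 0} ∩ {v | ∃ u ∈ Z, ∀ x ∉ Y.toFinset, v x = u x} := by
      ext w
      constructor
      · rintro ⟨v, hv, rfl⟩
        refine ⟨fun x hx => by simp [resetVal, hx], v, hv, fun x hx => ?_⟩
        have hxY : x ∉ Y := fun h => hx (Set.mem_toFinset.mpr h)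
        simp [resetVal, hxY]
      · rintro ⟨hzero, u, hu, hag⟩
        refine ⟨u, hu, ?_⟩
        funext x
        by_cases hx : x ∈ Y
        · rw [hzero x hx]; simp [resetVal, hx]
        · rw [hag x (fun h => hx (Set.mem_toFinset.mp h))]
          simp [resetVal, hx]
    rw [heq]
    exact isZone_inter (isZone_zeroOn Y) (isZone_projFinset x0 Y.toFinset hZ)

/-! ### Future -/

def futAt : At X → At (Option X)
  | .sgl x op c => .dg (some x) none op c
  | .dg x y op c => .dg (some x) (some y) op c

noncomputable def futList [Fintype X] (g : ClockConstraint X) : List (At (Option X)) :=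
  ((Finset.univ : Finset X).toList.map (fun x => At.dg none (some x) .le 0)) ++
    (toAtoms g).map futAt

theorem isZone_future [Fintype X] {Z : Set (Val X)} (hZ : IsZone Z) :
    IsZone (future Z) := by
  classical
  rcases isEmpty_or_nonempty X with hX | hX
  · obtain ⟨g, rfl⟩ := hZ
    refine ⟨.tt, ?_⟩
    ext w
    simp only [future, sem, Set.mem_setOf_eq, ClockConstraint.sat, iff_true]
    refine ⟨w, sat_of_empty hX g w, 0, ?_⟩
    funext x
    simp [addVal]
  · obtain ⟨x0⟩ := hX
    obtain ⟨g, rfl⟩ := hZ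
    refine ⟨ofAtoms (elimL x0 (futList g)), ?_⟩
    ext w
    simp only [future, sem, Set.mem_setOf_eq, ofAtoms_sat, elimL_sat]
    constructor
    · rintro ⟨v, hv, δ, rfl⟩
      refine ⟨δ, fun a ha => ?_⟩
      rcases List.mem_append.mp ha with h1 | h1
      · obtain ⟨x, _, rfl⟩ := List.mem_map.mp h1
        simp only [At.sat, extendV, Option.elim, CmpOp.holds]
        have : ((addVal v δ x : NNReal) : ℝ) = (v x : ℝ) + (δ : ℝ) := by
          simp [addVal]
        rw [this]
        push_cast
        have := (v x).coe_nonneg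
        linarith
      · obtain ⟨b, hb, rfl⟩ := List.mem_map.mp h1
        have hbv : b.sat v := (toAtoms_sat g v).mp hv b hb
        cases b with
        | sgl x op c =>
            simp only [futAt, At.sat, extendV, Option.elim]
            have e : ((addVal v δ x : NNReal) : ℝ) - (δ : ℝ) = (v x : ℝ) := by
              simp [addVal]
            rw [e]
            exact hbv
        | dg x y op c =>
            simp only [futAt, At.sat, extendV, Option.elim]
            have e : ((addVal v δ x : NNReal) : ℝ) - ((addVal v δ y : NNReal) : ℝ)
                = (v x : ℝ) - (v y : ℝ) := by
              simp [addVal]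
            rw [e]
            exact hbv
    · rintro ⟨r, hsat⟩
      have hge : ∀ x : X, r ≤ w x := by
        intro x
        have hmem : At.dg (none : Option X) (some x) CmpOp.le 0 ∈ futList g :=
          List.mem_append_left _ (List.mem_map.mpr
            ⟨x, (Finset.mem_toList).mpr (Finset.mem_univ x), rfl⟩)
        have := hsat _ hmem
        simp only [At.sat, extendV, Option.elim, CmpOp.holds, Int.cast_zero] at this
        have h2 : (r : ℝ) ≤ (w x : ℝ) := by linarith
        exact_mod_cast h2
      refine ⟨fun x => w x - r, ?_, r, ?_⟩
      · have hvx : ∀ x : X, ((w x - r : NNReal) : ℝ) = (w x : ℝ) - (r : ℝ) := by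
          intro x
          exact NNReal.coe_sub (hge x)
        rw [toAtoms_sat]
        intro b hb
        have hmem : futAt b ∈ futList g :=
          List.mem_append_right _ (List.mem_map.mpr ⟨b, hb, rfl⟩)
        have := hsat _ hmem
        cases b with
        | sgl x op c =>
            simp only [futAt, At.sat, extendV, Option.elim] at this ⊢
            rw [hvx x]
            exact this
        | dg x y op c =>
            simp only [futAt, At.sat, extendV, Option.elim] at this ⊢
            rw [hvx x, hvx y]
            have e : (w x : ℝ) - (r : ℝ) - ((w y : ℝ) - (r : ℝ))
                = (w x : ℝ) - (w y : ℝ) := by ring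
            rw [e]
            exact this
      · funext x
        simp only [addVal]
        exact (tsub_add_cancel_of_le (hge x)).symm

end ZAux

/-- zones are closed under intersection, reset and future. -/
theorem zones_closed_under_operations {X : Type} [Fintype X]
    {Z Z' : Set (Val X)} (hZ : IsZone Z) (hZ' : IsZone Z') :
    IsZone (Z ∩ Z') ∧ (∀ Y : Set X, IsZone (resetSet Y Z)) ∧ IsZone (future Z) := by
  exact ⟨ZAux.isZone_inter hZ hZ', fun Y => ZAux.isZone_resetSet Y hZ, ZAux.isZone_future hZ⟩
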